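/- arXiv:2510.03791 — 2 statements merged into one kernel-verified Lean document; each statement's English description precedes it below -/
import Mathlib

section
/- Let φ: E → E′ be an A-module homomorphism between A-modules E and E′ such that ann(E) = ann(E′). If φ is surjective, Ker(φ) is a prime submodule of E, and E is an annihilator multiplication module, then E′ is an annihilator multiplication module. -/
/-- An `A`-module `E` is an *annihilator multiplication module* if for every `e ∈ E`
there exists a finitely generated ideal `I` of `A` such that `ann(e) = ann(IE)`. -/
def IsAnnMultiplication (A : Type*) [CommRing A] (E : Type*) [AddCommGroup E]
    [Module A E] : Prop :=
  ∀ e : E, ∃ I : Ideal A, I.FG ∧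
    (Submodule.span A {e}).annihilator = (I • (⊤ : Submodule A E)).annihilator

/-- A proper submodule `V` of `E` is a *prime submodule* if `a • e ∈ V` implies
`a ∈ (V :_A E)` or `e ∈ V`. -/
def IsPrimeSubmodule {A : Type*} [CommRing A] {E : Type*} [AddCommGroup E]
    [Module A E] (V : Submodule A E) : Prop :=
  V ≠ ⊤ ∧ ∀ (a : A) (e : E), a • e ∈ V → a ∈ V.colon ⊤ ∨ e ∈ V

lemma mem_ann_smul_top {A : Type*} [CommRing A] {E : Type*} [AddCommGroup E]
    [Module A E] (I : Ideal A) (a : A) :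
    a ∈ (I • (⊤ : Submodule A E)).annihilator ↔ ∀ i ∈ I, ∀ x : E, a • (i • x) = 0 := by
  rw [Submodule.mem_annihilator]
  constructor
  · intro h i hi x
    exact h _ (Submodule.smul_mem_smul hi trivial)
  · intro h n hn
    refine Submodule.smul_induction_on hn (fun i hi x _ => h i hi x) ?_
    intro x y hx hy
    rw [smul_add, hx, hy, add_zero]

/-- If `φ : E → E'` is a surjective `A`-homomorphism whose kernel is a prime submodule,
`ann(E) = ann(E')` and `E` is an annihilator multiplication module, then so is `E'`. -/
theorem isAnnMultiplication_of_surjective {A : Type*} [CommRing A] [Nontrivial A]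
    {E : Type*} [AddCommGroup E] [Module A E] [Nontrivial E]
    {E' : Type*} [AddCommGroup E'] [Module A E'] [Nontrivial E']
    (φ : E →ₗ[A] E')
    (hann : (⊤ : Submodule A E).annihilator = (⊤ : Submodule A E').annihilator)
    (hsurj : Function.Surjective φ) (hker : IsPrimeSubmodule (LinearMap.ker φ))
    (hE : IsAnnMultiplication A E) :
    IsAnnMultiplication A E' := by
  intro e'
  obtain ⟨e, rfl⟩ := hsurj e'
  by_cases he : e ∈ LinearMap.ker φ
  · refine ⟨⊥, Submodule.fg_bot, ?_⟩
    rw [LinearMap.mem_ker] at he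
    rw [he, Submodule.span_zero_singleton, Submodule.bot_smul,
      Submodule.annihilator_bot]
  · obtain ⟨I, hIfg, hI⟩ := hE e
    refine ⟨I, hIfg, ?_⟩
    apply le_antisymm
    · intro a ha
      have hae : a • e ∈ LinearMap.ker φ := by
        rw [LinearMap.mem_ker, map_smul]
        exact (Submodule.mem_annihilator_span_singleton _ _).mp ha
      rcases hker.2 a e hae with hP | heK
      · rw [mem_ann_smul_top]
        intro i hi x'
        obtain ⟨x, rfl⟩ := hsurj x'
        have : a • x ∈ LinearMap.ker φ := Submodule.mem_colon.mp hP x trivial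
        rw [LinearMap.mem_ker] at this
        rw [smul_comm, ← map_smul, ← map_smul, map_smul, this, smul_zero]
      · exact absurd heK he
    · intro a ha
      rw [mem_ann_smul_top] at ha
      have hK : ∀ i ∈ I, ∀ x : E, a • (i • x) ∈ LinearMap.ker φ := by
        intro i hi x
        rw [LinearMap.mem_ker, map_smul, map_smul]
        exact ha i hi (φ x)
      rw [Submodule.mem_annihilator_span_singleton, ← map_smul]
      by_cases haP : a ∈ (LinearMap.ker φ).colon ⊤
      · have : a • e ∈ LinearMap.ker φ := Submodule.mem_colon.mp haP e trivial
        rwa [LinearMap.mem_ker] at this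
      · -- every i • x lies in the kernel
        have hIE : ∀ i ∈ I, ∀ x : E, i • x ∈ LinearMap.ker φ := by
          intro i hi x
          rcases hker.2 a (i • x) (hK i hi x) with h | h
          · exact absurd h haP
          · exact h
        have hIannE' : ∀ i ∈ I, i ∈ (⊤ : Submodule A E').annihilator := by
          intro i hi
          rw [Submodule.mem_annihilator]
          intro x' _
          obtain ⟨x, rfl⟩ := hsurj x'
          rw [← map_smul]
          exact (LinearMap.mem_ker).mp (hIE i hi x)
        have hIE0 : ∀ i ∈ I, ∀ x : E, i • x = 0 := by
          intro i hi x
          have := hIannE' i hi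
          rw [← hann, Submodule.mem_annihilator] at this
          exact this x trivial
        have h1 : (1 : A) ∈ (I • (⊤ : Submodule A E)).annihilator := by
          rw [mem_ann_smul_top]
          intro i hi x
          rw [hIE0 i hi x, smul_zero]
        rw [← hI, Submodule.mem_annihilator_span_singleton, one_smul] at h1
        exact absurd (LinearMap.mem_ker.mpr (by rw [h1, map_zero])) he
end

section
/- Let E be an annihilator multiplication A-module and V a submodule of E with ann(E) = ann(V). Then V is an annihilator multiplication A-module. -/
lemma mem_annihilator_smul_top {A : Type*} [CommRing A] {M : Type*} [AddCommGroup M]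
    [Module A M] (I : Ideal A) (a : A) :
    a ∈ (I • (⊤ : Submodule A M)).annihilator ↔
      ∀ i ∈ I, a * i ∈ (⊤ : Submodule A M).annihilator := by
  simp only [Submodule.mem_annihilator]
  constructor
  · intro h i hi m _
    have : a • (i • m) = 0 := h _ (Submodule.smul_mem_smul hi (Submodule.mem_top))
    rwa [smul_smul] at this
  · intro h m hm
    refine Submodule.smul_induction_on hm ?_ ?_
    · intro i hi x _
      rw [smul_smul]
      exact h i hi x Submodule.mem_top
    · intro x y hx hy
      rw [smul_add, hx, hy, add_zero]

lemma top_annihilator_eq {A : Type*} [CommRing A] {E : Type*} [AddCommGroup E]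
    [Module A E] (V : Submodule A E) :
    (⊤ : Submodule A V).annihilator = V.annihilator := by
  ext a
  simp only [Submodule.mem_annihilator]
  constructor
  · intro h v hv
    have := h ⟨v, hv⟩ Submodule.mem_top
    exact congrArg Subtype.val this
  · intro h m _
    exact Subtype.ext (h (m : E) m.2)

/-- If `E` is an annihilator multiplication module and `V` is a submodule with
`ann(E) = ann(V)`, then `V` is an annihilator multiplication module. -/
theorem submodule_isAnnMultiplication {A : Type*} [CommRing A] [Nontrivial A]
    {E : Type*} [AddCommGroup E] [Module A E] [Nontrivial E]
    (hE : IsAnnMultiplication A E) (V : Submodule A E)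
    (hann : (⊤ : Submodule A E).annihilator = V.annihilator) :
    IsAnnMultiplication A V := by
  intro v
  obtain ⟨I, hI, h⟩ := hE (v : E)
  refine ⟨I, hI, ?_⟩
  ext a
  rw [Submodule.mem_annihilator_span_singleton, mem_annihilator_smul_top]
  have h1 : a • v = 0 ↔ a • (v : E) = 0 := by
    rw [Subtype.ext_iff]; rfl
  have h2 : a • (v : E) = 0 ↔ a ∈ (I • (⊤ : Submodule A E)).annihilator := by
    rw [← h, Submodule.mem_annihilator_span_singleton]
  rw [h1, h2, mem_annihilator_smul_top]
  constructor
  · intro h' i hi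
    rw [top_annihilator_eq, ← hann]
    exact h' i hi
  · intro h' i hi
    rw [hann, ← top_annihilator_eq]
    exact h' i hi
end
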